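/- Let f ∈ L²(0,1), g = Proj_K(f) its projection onto the cone K of nondecreasing functions, z ∈ K, and ψ ∈ C¹(ℝ) convex. If (f-g)ψ'(z-g) ∈ L¹(0,1), then ∫₀¹ (f(w) - g(w)) ψ'(z(w) - g(w)) dw ≤ 0. -/

import Mathlib

open MeasureTheory Set Filter Topology

noncomputable section

/-- Lebesgue measure restricted to the interval (0,1). -/
def μ01 : MeasureTheory.Measure ℝ := MeasureTheory.volume.restrict (Set.Ioo 0 1)

/-- The convex cone `K` of (essentially) nondecreasing functions in L²(0,1). -/
def coneK : Set (ℝ → ℝ) := {g | MonotoneOn g (Set.Ioo 0 1) ∧ MeasureTheory.MemLp g 2 μ01}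

/-- `g` is the L²(0,1)-orthogonal projection of `f` onto the cone `K`,
characterized by the variational inequality `⟨f - g, z - g⟩ ≤ 0` for all `z ∈ K`. -/
def IsProjK (f g : ℝ → ℝ) : Prop :=
  g ∈ coneK ∧ ∀ z ∈ coneK, (∫ w in Set.Ioo (0:ℝ) 1, (f w - g w) * (z w - g w)) ≤ 0

/-- The convex envelope of `F` on `[0,1]`: the supremum of affine functions below `F` there. -/
def convEnv (F : ℝ → ℝ) (w : ℝ) : ℝ :=
  sSup {y | ∃ a b : ℝ, y = a + b * w ∧ ∀ v ∈ Set.Icc (0:ℝ) 1, a + b * v ≤ F v}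

/-- The open set `Ω_g ⊆ (0,1)` of points near which `g` is essentially constant. -/
def locConstSet (g : ℝ → ℝ) : Set ℝ :=
  {w | w ∈ Set.Ioo (0:ℝ) 1 ∧ ∃ a b c : ℝ, a < w ∧ w < b ∧
    ∀ᵐ x ∂μ01, x ∈ Set.Ioo a b → g x = c}

/-- The closed subspace `H_g` of L²(0,1) functions essentially constant on each
open interval contained in `Ω_g`. -/
def Hspace (g : ℝ → ℝ) : Set (ℝ → ℝ) :=
  {u | MeasureTheory.MemLp u 2 μ01 ∧ ∀ a b : ℝ, Set.Ioo a b ⊆ locConstSet g →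
    ∃ c : ℝ, ∀ᵐ x ∂μ01, x ∈ Set.Ioo a b → u x = c}

/-- `ξ` belongs to the subdifferential `∂I_K(g)` of the indicator function of `K` at `g ∈ K`. -/
def subdiffIK (g ξ : ℝ → ℝ) : Prop :=
  g ∈ coneK ∧ ∀ z ∈ coneK, (∫ w in Set.Ioo (0:ℝ) 1, ξ w * (z w - g w)) ≤ 0

instance : IsFiniteMeasure μ01 := by
  constructor
  rw [μ01, Measure.restrict_apply_univ, Real.volume_Ioo]
  norm_num

lemma integral_eq_mu01 (h : ℝ → ℝ) :
    (∫ w in Set.Ioo (0:ℝ) 1, h w) = ∫ w, h w ∂μ01 := rfl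

/-- Step A: the integral of `f - g` against constants vanishes. -/
lemma integral_sub_proj_const (f g : ℝ → ℝ) (hf : MeasureTheory.MemLp f 2 μ01)
    (hg : IsProjK f g) (c : ℝ) : (∫ w, (f w - g w) * c ∂μ01) = 0 := by
  have hgm := hg.1
  have h1 : (fun w => g w + 1) ∈ coneK := by
    refine ⟨fun x hx y hy hxy => by simpa using hgm.1 hx hy hxy, ?_⟩
    exact hgm.2.add (memLp_const 1)
  have h2 : (fun w => g w + (-1)) ∈ coneK := by
    refine ⟨fun x hx y hy hxy => by simpa using hgm.1 hx hy hxy, ?_⟩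
    exact hgm.2.add (memLp_const (-1))
  have e1 := hg.2 _ h1
  have e2 := hg.2 _ h2
  rw [integral_eq_mu01] at e1 e2
  simp only [add_sub_cancel_left] at e1 e2
  have hI1 : (∫ w, (f w - g w) * (1:ℝ) ∂μ01) ≤ 0 := e1
  have hI2 : (∫ w, (f w - g w) * (-1:ℝ) ∂μ01) ≤ 0 := e2
  simp only [mul_one, mul_neg_one, integral_neg] at hI1 hI2
  have h0 : (∫ w, (f w - g w) ∂μ01) = 0 := le_antisymm hI1 (by linarith)
  calc (∫ w, (f w - g w) * c ∂μ01) = (∫ w, (f w - g w) ∂μ01) * c := by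
        rw [integral_mul_const]
    _ = 0 := by rw [h0, zero_mul]

/-- Step B: the variational inequality extended to Lipschitz monotone `Φ` with `Φ 0 = 0`. -/
lemma integral_sub_proj_lip0 (f g z : ℝ → ℝ) (hf : MeasureTheory.MemLp f 2 μ01)
    (hg : IsProjK f g) (hz : z ∈ coneK) (Φ : ℝ → ℝ) (L : NNReal)
    (hΦm : Monotone Φ) (hΦl : LipschitzWith L Φ) (hΦ0 : Φ 0 = 0) :
    (∫ w, (f w - g w) * Φ (z w - g w) ∂μ01) ≤ 0 := by
  set t : ℝ := ((L : ℝ) + 1)⁻¹ with ht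
  have htpos : 0 < t := by positivity
  have htL : t * (L : ℝ) ≤ 1 := by
    rw [ht]
    rw [inv_mul_le_iff₀ (by positivity)]
    nlinarith [L.coe_nonneg]
  set z₁ : ℝ → ℝ := fun w => g w + t * Φ (z w - g w) with hz₁
  have hz₁K : z₁ ∈ coneK := by
    constructor
    · intro x hx y hy hxy
      have hgxy : g x ≤ g y := hg.1.1 hx hy hxy
      set a := z x - g x
      set b := z y - g y
      have hzxy : z x ≤ z y := hz.1 hx hy hxy
      have hab : a - b ≤ g y - g x := by simp only [a, b]; linarith
      rcases le_total a b with h | h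
      · have := hΦm h
        simp only [hz₁]
        nlinarith
      · have hlip : Φ a - Φ b ≤ (L : ℝ) * (a - b) := by
          have := hΦl.dist_le_mul a b
          rw [Real.dist_eq, Real.dist_eq] at this
          have h2 : |Φ a - Φ b| ≤ (L : ℝ) * |a - b| := this
          rw [abs_of_nonneg (by linarith [hΦm h] : (0:ℝ) ≤ Φ a - Φ b),
            abs_of_nonneg (by linarith : (0:ℝ) ≤ a - b)] at h2
          exact h2
        have key : t * (Φ a - Φ b) ≤ g y - g x := by
          have h1 : t * (Φ a - Φ b) ≤ t * ((L : ℝ) * (a - b)) := by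
            exact mul_le_mul_of_nonneg_left hlip (le_of_lt htpos)
          have h2 : t * ((L : ℝ) * (a - b)) ≤ 1 * (a - b) := by
            rw [← mul_assoc]
            exact mul_le_mul_of_nonneg_right htL (by linarith)
          nlinarith
        simp only [hz₁]
        nlinarith
    · exact hg.1.2.add (((hΦl.comp_memLp hΦ0 (hz.2.sub hg.1.2))).const_mul t)
  have hVI := hg.2 z₁ hz₁K
  rw [integral_eq_mu01] at hVI
  have heq : (∫ w, (f w - g w) * (z₁ w - g w) ∂μ01)
      = t * ∫ w, (f w - g w) * Φ (z w - g w) ∂μ01 := by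
    rw [← integral_const_mul]
    congr 1
    funext w
    simp only [hz₁]
    ring
  rw [heq] at hVI
  exact le_of_not_gt fun hpos => absurd hVI (not_le.mpr (mul_pos htpos hpos))

/-- Step B': the variational inequality for Lipschitz monotone `Φ` (arbitrary `Φ 0`). -/
lemma integral_sub_proj_lip (f g z : ℝ → ℝ) (hf : MeasureTheory.MemLp f 2 μ01)
    (hg : IsProjK f g) (hz : z ∈ coneK) (Φ : ℝ → ℝ) (L : NNReal)
    (hΦm : Monotone Φ) (hΦl : LipschitzWith L Φ) :
    (∫ w, (f w - g w) * Φ (z w - g w) ∂μ01) ≤ 0 := by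
  set Ψ : ℝ → ℝ := fun s => Φ s - Φ 0 with hΨ
  have hΨm : Monotone Ψ := fun a b hab => by
    simp only [hΨ]; linarith [hΦm hab]
  have hΨl : LipschitzWith L Ψ := LipschitzWith.of_dist_le_mul fun a b => by
    have := hΦl.dist_le_mul a b
    simpa [hΨ, Real.dist_eq, sub_sub_sub_cancel_right] using this
  have hΨ0 : Ψ 0 = 0 := by simp [hΨ]
  have hB := integral_sub_proj_lip0 f g z hf hg hz Ψ L hΨm hΨl hΨ0
  have hξ : MeasureTheory.MemLp (fun w => f w - g w) 2 μ01 := hf.sub hg.1.2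
  have hu : MeasureTheory.MemLp (fun w => z w - g w) 2 μ01 := hz.2.sub hg.1.2
  have hΨu : MeasureTheory.MemLp (fun w => Ψ (z w - g w)) 2 μ01 :=
    hΨl.comp_memLp hΨ0 hu
  have hmul : MeasureTheory.Integrable (fun w => (f w - g w) * Ψ (z w - g w)) μ01 := by
    have h2 : MeasureTheory.MemLp ((fun w => f w - g w) • (fun w => Ψ (z w - g w))) 1 μ01 :=
      hΨu.smul hξ
    have := h2.integrable le_rfl
    simpa [Pi.smul_apply, smul_eq_mul, Pi.mul_def] using this
  have hconst : MeasureTheory.Integrable (fun w => (f w - g w) * Φ 0) μ01 :=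
    (hξ.integrable (by norm_num)).mul_const _
  have heq : (∫ w, (f w - g w) * Φ (z w - g w) ∂μ01)
      = (∫ w, (f w - g w) * Ψ (z w - g w) ∂μ01) + ∫ w, (f w - g w) * Φ 0 ∂μ01 := by
    rw [← integral_add hmul hconst]
    congr 1
    funext w
    simp only [hΨ]
    ring
  rw [heq, integral_sub_proj_const f g hf hg (Φ 0), add_zero]
  exact hB
/-- Step C: the variational inequality for bounded continuous monotone `Φ`. -/
lemma integral_sub_proj_bddcont (f g z : ℝ → ℝ) (hf : MeasureTheory.MemLp f 2 μ01)
    (hg : IsProjK f g) (hz : z ∈ coneK) (Φ : ℝ → ℝ) (B : ℝ)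
    (hΦm : Monotone Φ) (hΦc : Continuous Φ) (hΦb : ∀ s, |Φ s| ≤ B) :
    (∫ w, (f w - g w) * Φ (z w - g w) ∂μ01) ≤ 0 := by
  have hB : 0 ≤ B := (abs_nonneg _).trans (hΦb 0)
  set ε : ℕ → ℝ := fun m => 1 / (m + 1) with hε
  have hεpos : ∀ m, 0 < ε m := fun m => by positivity
  set A : ℕ → ℝ → ℝ := fun m t => (∫ s in t..(t + ε m), Φ s) / ε m with hA
  -- interval integrability
  have hii : ∀ a b : ℝ, IntervalIntegrable Φ volume a b := fun a b =>
    hΦc.intervalIntegrable a b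
  -- uniform bound on A
  have hAb : ∀ m t, |A m t| ≤ B := by
    intro m t
    have h1 : ‖∫ s in t..(t + ε m), Φ s‖ ≤ B * |t + ε m - t| :=
      intervalIntegral.norm_integral_le_of_norm_le_const fun x _ => hΦb x
    rw [add_sub_cancel_left, abs_of_pos (hεpos m)] at h1
    have : |A m t| = ‖∫ s in t..(t + ε m), Φ s‖ / ε m := by
      rw [hA]; simp [abs_div, abs_of_pos (hεpos m), Real.norm_eq_abs]
    rw [this, div_le_iff₀ (hεpos m)]
    linarith
  -- monotonicity of A m
  have hAm : ∀ m, Monotone (A m) := by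
    intro m s t hst
    have hd : 0 ≤ t - s := by linarith
    have hshift : (∫ x in t..(t + ε m), Φ x) = ∫ x in s..(s + ε m), Φ (x + (t - s)) := by
      rw [intervalIntegral.integral_comp_add_right (fun x => Φ x) (t - s)]
      congr 1 <;> ring
    have hmono : (∫ x in s..(s + ε m), Φ x) ≤ ∫ x in s..(s + ε m), Φ (x + (t - s)) := by
      apply intervalIntegral.integral_mono_on (by linarith [hεpos m]) (hii _ _)
      · exact ((hΦc.comp (continuous_id.add continuous_const)).intervalIntegrable _ _)
      · intro x _
        exact hΦm (by linarith)
    rw [hA]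
    simp only
    rw [hshift]
    gcongr
  -- Lipschitz property of A m
  have hAl : ∀ m, LipschitzWith (Real.toNNReal (2 * B / ε m)) (A m) := by
    intro m
    have key : ∀ s t : ℝ, s ≤ t → |A m t - A m s| ≤ 2 * B / ε m * (t - s) := by
      intro s t hst
      have hsplit1 : (∫ x in s..t, Φ x) + (∫ x in t..(t + ε m), Φ x)
          = ∫ x in s..(t + ε m), Φ x :=
        intervalIntegral.integral_add_adjacent_intervals (hii _ _) (hii _ _)
      have hsplit2 : (∫ x in s..(s + ε m), Φ x) + (∫ x in (s + ε m)..(t + ε m), Φ x)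
          = ∫ x in s..(t + ε m), Φ x :=
        intervalIntegral.integral_add_adjacent_intervals (hii _ _) (hii _ _)
      have hb1 : ‖∫ x in s..t, Φ x‖ ≤ B * |t - s| :=
        intervalIntegral.norm_integral_le_of_norm_le_const fun x _ => hΦb x
      have hb2 : ‖∫ x in (s + ε m)..(t + ε m), Φ x‖ ≤ B * |t + ε m - (s + ε m)| :=
        intervalIntegral.norm_integral_le_of_norm_le_const fun x _ => hΦb x
      rw [abs_of_nonneg (by linarith)] at hb1
      have hb2' : ‖∫ x in (s + ε m)..(t + ε m), Φ x‖ ≤ B * (t - s) := by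
        rw [show |t + ε m - (s + ε m)| = t - s by rw [abs_of_nonneg] <;> ring_nf <;> linarith] at hb2
        exact hb2
      have hdiff : A m t - A m s
          = ((∫ x in (s + ε m)..(t + ε m), Φ x) - ∫ x in s..t, Φ x) / ε m := by
        rw [hA]
        simp only
        rw [div_sub_div_same]
        congr 1
        linarith
      rw [hdiff, abs_div, abs_of_pos (hεpos m), div_le_iff₀ (hεpos m)]
      calc |(∫ x in (s + ε m)..(t + ε m), Φ x) - ∫ x in s..t, Φ x|
            ≤ ‖∫ x in (s + ε m)..(t + ε m), Φ x‖ + ‖∫ x in s..t, Φ x‖ := by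
              rw [Real.norm_eq_abs, Real.norm_eq_abs]; exact abs_sub _ _
          _ ≤ B * (t - s) + B * (t - s) := add_le_add hb2' hb1
          _ = 2 * B / ε m * (t - s) * ε m := by have hne := (hεpos m).ne'; field_simp; ring
    apply LipschitzWith.of_dist_le_mul
    intro a b
    rw [Real.dist_eq, Real.dist_eq, Real.coe_toNNReal _ (by positivity : (0:ℝ) ≤ 2 * B / ε m)]
    rcases le_total a b with h | h
    · have h1 : |a - b| = b - a := by rw [abs_sub_comm]; exact abs_of_nonneg (by linarith)
      rw [h1, abs_sub_comm]
      exact key a b h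
    · have h1 : |a - b| = a - b := abs_of_nonneg (by linarith)
      rw [h1]
      exact key b a h
  -- pointwise convergence A m t → Φ t
  have hAconv : ∀ t : ℝ, Tendsto (fun m => A m t) atTop (𝓝 (Φ t)) := by
    intro t
    have hG : HasDerivAt (fun u => ∫ x in t..u, Φ x) (Φ t) t :=
      intervalIntegral.integral_hasDerivAt_right (hii t t)
        (hΦc.stronglyMeasurableAtFilter _ _) hΦc.continuousAt
    have hslope := hasDerivAt_iff_tendsto_slope.mp hG
    have htt : Tendsto (fun m : ℕ => t + ε m) atTop (𝓝[≠] t) := by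
      apply tendsto_nhdsWithin_of_tendsto_nhds_of_eventually_within
      · have : Tendsto (fun m : ℕ => ε m) atTop (𝓝 0) := by
          simpa [hε, one_div] using tendsto_one_div_add_atTop_nhds_zero_nat (𝕜 := ℝ)
        simpa using tendsto_const_nhds.add this
      · exact Eventually.of_forall fun m => by
          simp only [mem_compl_iff, mem_singleton_iff]
          have := hεpos m; intro hcon; rw [← sub_eq_zero] at hcon; simp at hcon; linarith
    have := hslope.comp htt
    apply this.congr
    intro m
    simp only [Function.comp_apply, slope_def_field]
    rw [hA]
    simp only
    rw [intervalIntegral.integral_same]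
    congr 1 <;> ring_nf
  -- dominated convergence
  have hξi : MeasureTheory.Integrable (fun w => f w - g w) μ01 :=
    (hf.sub hg.1.2).integrable (by norm_num)
  have hξae := hξi.aestronglyMeasurable
  have huae : MeasureTheory.AEStronglyMeasurable (fun w => z w - g w) μ01 :=
    (hz.2.sub hg.1.2).aestronglyMeasurable
  have hDCT : Tendsto (fun m => ∫ w, (f w - g w) * A m (z w - g w) ∂μ01) atTop
      (𝓝 (∫ w, (f w - g w) * Φ (z w - g w) ∂μ01)) := by
    apply MeasureTheory.tendsto_integral_of_dominated_convergence
      (fun w => |f w - g w| * B)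
    · intro m
      exact hξae.mul (((hAl m).continuous.comp_aestronglyMeasurable) huae)
    · exact hξi.abs.mul_const B
    · intro m
      apply Eventually.of_forall
      intro w
      rw [Real.norm_eq_abs, abs_mul]
      exact mul_le_mul_of_nonneg_left (hAb m _) (abs_nonneg _)
    · apply Eventually.of_forall
      intro w
      exact (hAconv (z w - g w)).const_mul _
  have hle : ∀ m, (∫ w, (f w - g w) * A m (z w - g w) ∂μ01) ≤ 0 := fun m =>
    integral_sub_proj_lip f g z hf hg hz (A m) _ (hAm m) (hAl m)
  exact le_of_tendsto hDCT (Eventually.of_forall hle)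
/-- Clamping helper: for monotone `Φ`, the clamped value is controlled. -/
lemma abs_comp_clamp_le (Φ : ℝ → ℝ) (hΦm : Monotone Φ) (n : ℕ) (t : ℝ) :
    |Φ (max (-(n + 1 : ℝ)) (min (n + 1 : ℝ) t))| ≤ |Φ t| + |Φ 0| := by
  set c := max (-(n + 1 : ℝ)) (min (n + 1 : ℝ) t) with hc
  have hn : (0:ℝ) < n + 1 := by positivity
  rcases le_total 0 t with h | h
  · have h1 : 0 ≤ c := le_max_of_le_right (le_min (by linarith) h)
    have h2 : c ≤ t := max_le (by linarith) (min_le_right _ _)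
    have := hΦm h1
    have := hΦm h2
    have := neg_abs_le (Φ 0)
    have := le_abs_self (Φ t)
    have := abs_nonneg (Φ t)
    have := abs_nonneg (Φ 0)
    rw [abs_le]
    constructor <;> linarith
  · have h1 : c ≤ 0 := by
      apply max_le (by linarith)
      exact le_trans (min_le_right _ _) h
    have h2 : t ≤ c := le_max_of_le_right (le_min (by linarith [le_trans h hn.le]) le_rfl)
    have := hΦm h1
    have := hΦm h2
    have := neg_abs_le (Φ t)
    have := le_abs_self (Φ 0)
    have := abs_nonneg (Φ t)
    have := abs_nonneg (Φ 0)
    rw [abs_le]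
    constructor <;> linarith
theorem stmt7 (f g z ψ : ℝ → ℝ) (hf : MeasureTheory.MemLp f 2 μ01)
    (hg : IsProjK f g) (hz : z ∈ coneK)
    (hψ : ContDiff ℝ 1 ψ) (hconv : ConvexOn ℝ Set.univ ψ)
    (hint : MeasureTheory.Integrable (fun w => (f w - g w) * deriv ψ (z w - g w)) μ01) :
    (∫ w in Set.Ioo (0:ℝ) 1, (f w - g w) * deriv ψ (z w - g w)) ≤ 0 := by
  rw [integral_eq_mu01]
  set Φ : ℝ → ℝ := deriv ψ with hΦ
  have hΦm : Monotone Φ := by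
    rw [← monotoneOn_univ]
    exact hconv.monotoneOn_deriv fun x _ => (hψ.differentiable one_ne_zero).differentiableAt
  have hΦc : Continuous Φ := hψ.continuous_deriv le_rfl
  -- clamped approximations
  set clmp : ℕ → ℝ → ℝ := fun n t => max (-(n + 1 : ℝ)) (min (n + 1 : ℝ) t) with hclmp
  set Φn : ℕ → ℝ → ℝ := fun n t => Φ (clmp n t) with hΦn
  have hclmpm : ∀ n, Monotone (clmp n) := fun n a b hab =>
    max_le_max le_rfl (min_le_min le_rfl hab)
  have hΦnm : ∀ n, Monotone (Φn n) := fun n a b hab => hΦm (hclmpm n hab)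
  have hΦnc : ∀ n, Continuous (Φn n) :=
    fun n => hΦc.comp (continuous_const.max (continuous_const.min continuous_id))
  have hΦnb : ∀ n s, |Φn n s| ≤ |Φ (-(n + 1 : ℝ))| + |Φ (n + 1 : ℝ)| := by
    intro n s
    have hn : (0:ℝ) < n + 1 := by positivity
    have h1 : Φ (-(n + 1 : ℝ)) ≤ Φn n s := hΦm (le_max_left _ _)
    have h2 : Φn n s ≤ Φ (n + 1 : ℝ) := by
      apply hΦm
      apply max_le (by linarith) (min_le_left _ _)
    have := neg_abs_le (Φ (-(n + 1 : ℝ)))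
    have := le_abs_self (Φ (n + 1 : ℝ))
    have := abs_nonneg (Φ (-(n + 1 : ℝ)))
    have := abs_nonneg (Φ (n + 1 : ℝ))
    rw [abs_le]
    constructor <;> linarith
  have hle : ∀ n, (∫ w, (f w - g w) * Φn n (z w - g w) ∂μ01) ≤ 0 := fun n =>
    integral_sub_proj_bddcont f g z hf hg hz (Φn n) _ (hΦnm n) (hΦnc n) (hΦnb n)
  -- dominated convergence
  have hξi : MeasureTheory.Integrable (fun w => f w - g w) μ01 :=
    (hf.sub hg.1.2).integrable (by norm_num)
  have hξae := hξi.aestronglyMeasurable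
  have huae : MeasureTheory.AEStronglyMeasurable (fun w => z w - g w) μ01 :=
    (hz.2.sub hg.1.2).aestronglyMeasurable
  have hDCT : Tendsto (fun n => ∫ w, (f w - g w) * Φn n (z w - g w) ∂μ01) atTop
      (𝓝 (∫ w, (f w - g w) * Φ (z w - g w) ∂μ01)) := by
    apply MeasureTheory.tendsto_integral_of_dominated_convergence
      (fun w => |(f w - g w) * Φ (z w - g w)| + |f w - g w| * |Φ 0|)
    · intro n
      exact hξae.mul ((hΦnc n).comp_aestronglyMeasurable huae)
    · exact hint.abs.add (hξi.abs.mul_const _)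
    · intro n
      apply Eventually.of_forall
      intro w
      rw [Real.norm_eq_abs, abs_mul, abs_mul]
      have := abs_comp_clamp_le Φ hΦm n (z w - g w)
      have h0 : |Φn n (z w - g w)| ≤ |Φ (z w - g w)| + |Φ 0| := this
      calc |f w - g w| * |Φn n (z w - g w)|
          ≤ |f w - g w| * (|Φ (z w - g w)| + |Φ 0|) :=
            mul_le_mul_of_nonneg_left h0 (abs_nonneg _)
        _ = |f w - g w| * |Φ (z w - g w)| + |f w - g w| * |Φ 0| := by ring
    · apply Eventually.of_forall
      intro w
      apply tendsto_atTop_of_eventually_const (i₀ := ⌈|z w - g w|⌉₊)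
      intro n hn
      have h1 : |z w - g w| ≤ (n : ℝ) + 1 := by
        calc |z w - g w| ≤ (⌈|z w - g w|⌉₊ : ℝ) := Nat.le_ceil _
          _ ≤ (n : ℝ) := by exact_mod_cast hn
          _ ≤ (n : ℝ) + 1 := by linarith
      have hcl : clmp n (z w - g w) = z w - g w := by
        rw [hclmp]
        simp only
        rw [min_eq_right (by linarith [le_abs_self (z w - g w)]),
          max_eq_right (by linarith [neg_abs_le (z w - g w)])]
      simp only [hΦn, hcl]
  exact le_of_tendsto hDCT (Eventually.of_forall hle)
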